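/- Let A ∈ ℝ^{n×m}, let B = A(:,J) have full column rank ℓ, let I be a row index set of size ℓ such that C₁ = B(I,:) is invertible, and let C₂ = B(I^c,:) be the remaining rows of B. Let R = A(I,:). Then ‖A − A R† R‖ ≤ √(1 + ‖C₂C₁^{-1}‖²) · ‖A − BB†A‖ in the spectral norm. -/

import Mathlib

open Matrix

noncomputable def specNorm {m n : Type*} [Fintype m] [Fintype n] [DecidableEq n]
    (A : Matrix m n ℝ) : ℝ :=
  ‖LinearMap.toContinuousLinearMap (Matrix.toEuclideanLin A)‖

noncomputable def sMin {m n : Type*} [Fintype m] [Fintype n] [DecidableEq n]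
    (A : Matrix m n ℝ) : ℝ :=
  Real.sqrt (⨅ i, (Matrix.isHermitian_conjTranspose_mul_self A).eigenvalues i)

noncomputable def singVals {m n : ℕ} (A : Matrix (Fin m) (Fin n) ℝ) : Fin n → ℝ :=
  fun i =>
    Real.sqrt ((Matrix.isHermitian_conjTranspose_mul_self A).eigenvalues
      (Tuple.sort (Matrix.isHermitian_conjTranspose_mul_self A).eigenvalues i.rev))

noncomputable def pinv {m n : Type*} [Fintype m] [Fintype n] (A : Matrix m n ℝ) : Matrix n m ℝ :=
  open Classical in
  if h : ∃ B : Matrix n m ℝ,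
      A * B * A = A ∧ B * A * B = B ∧ (A * B)ᵀ = A * B ∧ (B * A)ᵀ = B * A
  then h.choose else 0

namespace DongAux

lemma real_conjT_eq {a b : Type*} (A : Matrix a b ℝ) : Aᴴ = Aᵀ := by
  ext i j; simp [conjTranspose_apply]

section sq
variable {k : Type*} [Fintype k] [DecidableEq k]

lemma conj_diag_mul (U : Matrix k k ℝ) (hU1 : star U * U = 1) (d e : k → ℝ) :
    (U * diagonal d * star U) * (U * diagonal e * star U) =
      U * diagonal (fun i => d i * e i) * star U := by
  calc _ = U * diagonal d * ((star U * U) * (diagonal e * star U)) := by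
          simp only [Matrix.mul_assoc]
    _ = _ := by rw [hU1, Matrix.one_mul, ← Matrix.mul_assoc, Matrix.mul_assoc _ (diagonal d),
          diagonal_mul_diagonal]

lemma spectral' {M : Matrix k k ℝ} (hM : M.IsHermitian) :
    M = (hM.eigenvectorUnitary : Matrix k k ℝ) * diagonal hM.eigenvalues *
      star (hM.eigenvectorUnitary : Matrix k k ℝ) := by
  have h2 : (RCLike.ofReal ∘ hM.eigenvalues : k → ℝ) = hM.eigenvalues := by ext i; simp
  conv_lhs => rw [hM.spectral_theorem, h2, Unitary.conjStarAlgAut_apply]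

/-- Pseudoinverse of a real symmetric matrix. -/
lemma exists_symPinv (M : Matrix k k ℝ) (hM : M.IsHermitian) :
    ∃ Mp : Matrix k k ℝ, Mpᵀ = Mp ∧ M * Mp = Mp * M ∧ M * Mp * M = M ∧ Mp * M * Mp = Mp := by
  obtain ⟨U, hU1, d, hMeq⟩ : ∃ U : Matrix k k ℝ, star U * U = 1 ∧ ∃ d : k → ℝ,
      M = U * diagonal d * star U := by
    refine ⟨(hM.eigenvectorUnitary : Matrix k k ℝ),
      (Matrix.mem_unitaryGroup_iff').mp (hM.eigenvectorUnitary).2, hM.eigenvalues, spectral' hM⟩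
  subst hMeq
  refine ⟨U * diagonal (fun i => (d i)⁻¹) * star U, ?_, ?_, ?_, ?_⟩
  · have hd : star (diagonal (fun i => (d i)⁻¹) : Matrix k k ℝ)
        = diagonal (fun i => (d i)⁻¹) := by
      rw [Matrix.star_eq_conjTranspose, real_conjT_eq, diagonal_transpose]
    rw [← real_conjT_eq, ← Matrix.star_eq_conjTranspose]
    simp only [StarMul.star_mul, star_star, hd, Matrix.mul_assoc]
  · rw [conj_diag_mul U hU1, conj_diag_mul U hU1]
    have he : (fun i => d i * (d i)⁻¹) = (fun i => (d i)⁻¹ * d i) := by ext i; ring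
    rw [he]
  · rw [conj_diag_mul U hU1, conj_diag_mul U hU1]
    have he : (fun i => d i * (d i)⁻¹ * d i) = d := by
      ext i; rcases eq_or_ne (d i) 0 with h | h <;> field_simp [h]
    rw [he]
  · rw [conj_diag_mul U hU1, conj_diag_mul U hU1]
    have he : (fun i => (d i)⁻¹ * d i * (d i)⁻¹) = (fun i => (d i)⁻¹) := by
      ext i; rcases eq_or_ne (d i) 0 with h | h <;> field_simp [h]
    rw [he]

end sq

section pinvex
variable {a b : Type*} [Fintype a] [Fintype b] [DecidableEq b]

lemma exists_pinv (A : Matrix a b ℝ) :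
    ∃ B : Matrix b a ℝ,
      A * B * A = A ∧ B * A * B = B ∧ (A * B)ᵀ = A * B ∧ (B * A)ᵀ = B * A := by
  set M := Aᵀ * A with hMdef
  have hMT : Mᵀ = M := by
    rw [hMdef, Matrix.transpose_mul, Matrix.transpose_transpose]
  obtain ⟨Mp, hT, hcomm, hMMp, hMpM⟩ :=
    exists_symPinv (Aᵀ * A) (by have := Matrix.isHermitian_conjTranspose_mul_self A; rwa [real_conjT_eq] at this)
  set N : Matrix b b ℝ := 1 - Mp * M with hNdef
  have hNT : Nᵀ = N := by
    rw [hNdef, Matrix.transpose_sub, Matrix.transpose_one, Matrix.transpose_mul, hT, hMT,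
      ← hcomm]
  have hMN : M * N = 0 := by
    rw [hNdef, Matrix.mul_sub, Matrix.mul_one, ← Matrix.mul_assoc, hMMp, sub_self]
  have hAN : A * N = 0 := by
    have h0 : (A * N)ᴴ * (A * N) = 0 := by
      rw [real_conjT_eq, Matrix.transpose_mul, hNT, Matrix.mul_assoc,
        ← Matrix.mul_assoc Aᵀ A N, ← hMdef, hMN, Matrix.mul_zero]
    exact Matrix.conjTranspose_mul_self_eq_zero.mp h0
  have hkey : A * (Mp * M) = A := by
    have h1 : A - A * (Mp * M) = 0 := by
      calc A - A * (Mp * M) = A * N := by rw [hNdef, Matrix.mul_sub, Matrix.mul_one]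
        _ = 0 := hAN
    exact (sub_eq_zero.mp h1).symm
  refine ⟨Mp * Aᵀ, ?_, ?_, ?_, ?_⟩
  · calc A * (Mp * Aᵀ) * A = A * (Mp * M) := by
          rw [hMdef]; simp only [Matrix.mul_assoc]
      _ = A := hkey
  · calc Mp * Aᵀ * A * (Mp * Aᵀ) = (Mp * M * Mp) * Aᵀ := by
          rw [hMdef]; simp only [Matrix.mul_assoc]
      _ = Mp * Aᵀ := by rw [hMpM]
  · calc (A * (Mp * Aᵀ))ᵀ = A * (Mpᵀ * Aᵀ) := by
          simp only [Matrix.transpose_mul, Matrix.transpose_transpose, Matrix.mul_assoc]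
      _ = A * (Mp * Aᵀ) := by rw [hT]
  · calc (Mp * Aᵀ * A)ᵀ = (Mp * M)ᵀ := by rw [hMdef, Matrix.mul_assoc]
      _ = M * Mp := by rw [Matrix.transpose_mul, hT, hMT]
      _ = Mp * M := hcomm
      _ = Mp * Aᵀ * A := by rw [hMdef, Matrix.mul_assoc]

lemma pinv_spec (A : Matrix a b ℝ) :
    A * pinv A * A = A ∧ pinv A * A * pinv A = pinv A ∧
      (A * pinv A)ᵀ = A * pinv A ∧ (pinv A * A)ᵀ = pinv A * A := by
  have h := exists_pinv A
  have hp : pinv A = h.choose := by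
    unfold pinv
    rw [dif_pos h]
  rw [hp]
  exact h.choose_spec

end pinvex

noncomputable def eu {k : Type*} [Fintype k] (v : k → ℝ) : EuclideanSpace ℝ k :=
  (WithLp.equiv 2 (k → ℝ)).symm v

lemma eu_sub {k : Type*} [Fintype k] (v w : k → ℝ) : eu (v - w) = eu v - eu w := rfl

lemma eu_norm {k : Type*} [Fintype k] (v : k → ℝ) :
    ‖eu v‖ = Real.sqrt (∑ i, (v i) ^ 2) := by
  rw [EuclideanSpace.norm_eq]
  congr 1
  refine Finset.sum_congr rfl fun i _ => ?_
  rw [Real.norm_eq_abs, sq_abs]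
  rfl

lemma eu_norm_sq {k : Type*} [Fintype k] (v : k → ℝ) :
    ‖eu v‖ ^ 2 = ∑ i, (v i) ^ 2 := by
  rw [eu_norm, Real.sq_sqrt]
  positivity

variable {a b : Type*} [Fintype a] [Fintype b] [DecidableEq b]

lemma specNorm_nonneg (A : Matrix a b ℝ) : 0 ≤ specNorm A := norm_nonneg _

lemma mulVec_norm_le (A : Matrix a b ℝ) (v : b → ℝ) :
    ‖eu (A *ᵥ v)‖ ≤ specNorm A * ‖eu v‖ := by
  have h := (LinearMap.toContinuousLinearMap (Matrix.toEuclideanLin A)).le_opNorm (eu v)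
  have h2 : (Matrix.toEuclideanLin A) (eu v) = eu (A *ᵥ v) :=
    Matrix.toEuclideanLin_apply_piLp_toLp A v
  rw [LinearMap.coe_toContinuousLinearMap', h2] at h
  exact h

lemma specNorm_le_bound (A : Matrix a b ℝ) {c : ℝ} (hc : 0 ≤ c)
    (H : ∀ v : b → ℝ, ‖eu (A *ᵥ v)‖ ≤ c * ‖eu v‖) : specNorm A ≤ c := by
  refine ContinuousLinearMap.opNorm_le_bound _ hc fun x => ?_
  have hx : x = eu (WithLp.equiv 2 (b → ℝ) x) := (Equiv.symm_apply_apply _ _).symm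
  have h2 : (Matrix.toEuclideanLin A) x = eu (A *ᵥ (WithLp.equiv 2 (b → ℝ) x)) :=
    Matrix.toEuclideanLin_apply A x
  rw [LinearMap.coe_toContinuousLinearMap']
  calc ‖(Matrix.toEuclideanLin A) x‖ = ‖eu (A *ᵥ (WithLp.equiv 2 (b → ℝ) x))‖ := by rw [h2]
    _ ≤ c * ‖eu (WithLp.equiv 2 (b → ℝ) x)‖ := H _
    _ = c * ‖x‖ := by rw [← hx]

lemma proj_contract {k : Type*} [Fintype k] [DecidableEq k] (P : Matrix k k ℝ)
    (hsym : Pᵀ = P) (hidem : P * P = P) (v : k → ℝ) :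
    ‖eu ((1 - P) *ᵥ v)‖ ≤ ‖eu v‖ := by
  rw [eu_norm, eu_norm]
  apply Real.sqrt_le_sqrt
  have hmv : (1 - P) *ᵥ v = v - P *ᵥ v := by
    rw [Matrix.sub_mulVec, Matrix.one_mulVec]
  rw [hmv]
  set y := P *ᵥ v with hy
  have key : (∑ i, y i * y i) = ∑ i, v i * y i := by
    have hyP : y ᵥ* P = y := by
      rw [← Matrix.mulVec_transpose, hsym, hy, Matrix.mulVec_mulVec, hidem]
    have h1 : y ⬝ᵥ y = v ⬝ᵥ y := by
      calc y ⬝ᵥ y = y ⬝ᵥ (P *ᵥ v) := by rw [← hy]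
        _ = (y ᵥ* P) ⬝ᵥ v := Matrix.dotProduct_mulVec y P v
        _ = y ⬝ᵥ v := by rw [hyP]
        _ = v ⬝ᵥ y := dotProduct_comm y v
    simpa [dotProduct] using h1
  have hynn : 0 ≤ ∑ i, v i * y i := by
    rw [← key]
    exact Finset.sum_nonneg fun i _ => mul_self_nonneg _
  have hexp : ∑ i, ((v - y) i) ^ 2
      = ∑ i, (v i ^ 2) - 2 * (∑ i, v i * y i) + ∑ i, y i * y i := by
    rw [Finset.mul_sum, ← Finset.sum_sub_distrib, ← Finset.sum_add_distrib]
    refine Finset.sum_congr rfl fun i _ => ?_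
    simp only [Pi.sub_apply]
    ring
  rw [hexp, key]
  linarith

lemma sum_split {n l : ℕ} {I : Fin l → Fin n} {Ic : Fin (n - l) → Fin n}
    (hpart : Function.Bijective (Sum.elim I Ic)) (f : Fin n → ℝ) :
    ∑ i, f i = (∑ j, f (I j)) + ∑ j, f (Ic j) := by
  rw [← Fintype.sum_bijective _ hpart (fun s => f (Sum.elim I Ic s)) f (fun s => rfl)]
  simp [Fintype.sum_sum_type]

lemma submatrix_mul_id {p q r s : Type*} [Fintype q] (X : Matrix p q ℝ) (Y : Matrix q r ℝ)
    (f : s → p) : (X * Y).submatrix f id = X.submatrix f id * Y := by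
  ext i j; simp [Matrix.mul_apply]

end DongAux

set_option maxHeartbeats 2000000 in
open DongAux in
theorem dong_row_selection_bound {n m l : ℕ} (A : Matrix (Fin n) (Fin m) ℝ)
    (J : Fin l ↪ Fin m) (hB : (A.submatrix id J).rank = l)
    (I : Fin l → Fin n) (Ic : Fin (n - l) → Fin n)
    (hpart : Function.Bijective (Sum.elim I Ic))
    (hC1 : IsUnit ((A.submatrix id J).submatrix I id)) :
    specNorm (A - A * pinv (A.submatrix I id) * A.submatrix I id) ≤
      Real.sqrt (1 + specNorm ((A.submatrix id J).submatrix Ic id *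
          ((A.submatrix id J).submatrix I id)⁻¹) ^ 2) *
        specNorm (A - A.submatrix id J * pinv (A.submatrix id J) * A) := by
  classical
  set B : Matrix (Fin n) (Fin l) ℝ := A.submatrix id J with hBdef
  set R : Matrix (Fin l) (Fin m) ℝ := A.submatrix I id with hRdef
  set C1 : Matrix (Fin l) (Fin l) ℝ := B.submatrix I id with hC1def
  set C2 : Matrix (Fin (n - l)) (Fin l) ℝ := B.submatrix Ic id with hC2def
  obtain ⟨hR1, hR2, hR3, hR4⟩ := pinv_spec R
  obtain ⟨hB1, hB2, hB3, hB4⟩ := pinv_spec B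
  have hC1d : IsUnit C1.det := (Matrix.isUnit_iff_isUnit_det C1).mp hC1
  have hC1inv : C1 * C1⁻¹ = 1 := Matrix.mul_nonsing_inv _ hC1d
  have hC1inv' : C1⁻¹ * C1 = 1 := Matrix.nonsing_inv_mul _ hC1d
  set P : Matrix (Fin m) (Fin m) ℝ := pinv R * R with hPdef
  have hPsym : Pᵀ = P := hR4
  have hPidem : P * P = P := by
    calc P * P = pinv R * (R * pinv R * R) := by
          rw [hPdef]; simp only [Matrix.mul_assoc]
      _ = P := by rw [hR1]
  set E : Matrix (Fin n) (Fin m) ℝ := A - B * pinv B * A with hEdef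
  set G : Matrix (Fin l) (Fin m) ℝ := pinv B * A with hGdef
  have hAeq : A = B * G + E := by
    rw [hEdef, hGdef, ← Matrix.mul_assoc]
    abel
  set EI : Matrix (Fin l) (Fin m) ℝ := E.submatrix I id with hEIdef
  have hRsplit : R = C1 * G + EI := by
    rw [hRdef]
    conv_lhs => rw [hAeq]
    simp only [Matrix.submatrix_add, Pi.add_apply]
    rw [submatrix_mul_id, hEIdef, hC1def]
  set F : Matrix (Fin n) (Fin m) ℝ := E - B * C1⁻¹ * EI with hFdef
  have hFalt : F = A - B * C1⁻¹ * R := by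
    rw [hFdef, hRsplit]
    conv_rhs => rw [hAeq]
    have h5 : B * C1⁻¹ * (C1 * G + EI) = B * G + B * C1⁻¹ * EI := by
      rw [Matrix.mul_add]
      congr 1
      calc B * C1⁻¹ * (C1 * G) = B * ((C1⁻¹ * C1) * G) := by simp only [Matrix.mul_assoc]
        _ = B * G := by rw [hC1inv', Matrix.one_mul]
    rw [h5]
    abel
  have hRP : R * (1 - P) = 0 := by
    rw [Matrix.mul_sub, Matrix.mul_one, hPdef, ← Matrix.mul_assoc, hR1, sub_self]
  have hLHS : A - A * pinv R * R = F * (1 - P) := by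
    rw [hFalt, Matrix.sub_mul]
    have h6 : B * C1⁻¹ * R * (1 - P) = 0 := by
      rw [Matrix.mul_assoc, hRP, Matrix.mul_zero]
    rw [h6, sub_zero, Matrix.mul_sub, Matrix.mul_one, hPdef, ← Matrix.mul_assoc]
  rw [hLHS]
  set γ : ℝ := specNorm (C2 * C1⁻¹) with hγdef
  have hγnn : 0 ≤ γ := specNorm_nonneg _
  have hsqnn : 0 ≤ Real.sqrt (1 + γ ^ 2) := Real.sqrt_nonneg _
  have hFI : F.submatrix I id = 0 := by
    rw [hFdef]
    simp only [Matrix.submatrix_sub, Pi.sub_apply]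
    rw [submatrix_mul_id, submatrix_mul_id, ← hC1def, ← hEIdef, hC1inv, Matrix.one_mul, sub_self]
  have hFIc : F.submatrix Ic id = E.submatrix Ic id - C2 * C1⁻¹ * EI := by
    rw [hFdef]
    simp only [Matrix.submatrix_sub, Pi.sub_apply]
    rw [submatrix_mul_id, submatrix_mul_id, ← hC2def]
  have step1 : specNorm (F * (1 - P)) ≤ specNorm F := by
    apply specNorm_le_bound _ (specNorm_nonneg F)
    intro v
    have hcomp : (F * (1 - P)) *ᵥ v = F *ᵥ ((1 - P) *ᵥ v) := by
      rw [← Matrix.mulVec_mulVec]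
    rw [hcomp]
    calc ‖eu (F *ᵥ ((1 - P) *ᵥ v))‖ ≤ specNorm F * ‖eu ((1 - P) *ᵥ v)‖ := mulVec_norm_le _ _
      _ ≤ specNorm F * ‖eu v‖ :=
          mul_le_mul_of_nonneg_left (proj_contract P hPsym hPidem v) (specNorm_nonneg F)
  have step2 : specNorm F ≤ Real.sqrt (1 + γ ^ 2) * specNorm E := by
    apply specNorm_le_bound _ (mul_nonneg hsqnn (specNorm_nonneg E))
    intro v
    set u : Fin l → ℝ := EI *ᵥ v with hu
    set z : Fin (n - l) → ℝ := (E.submatrix Ic id) *ᵥ v with hz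
    have t1 : ∀ j, (F *ᵥ v) (I j) = 0 := by
      intro j
      have h7 : (F *ᵥ v) (I j) = ((F.submatrix I id) *ᵥ v) j := rfl
      rw [h7, hFI]
      simp
    have t2 : ∀ j, (F *ᵥ v) (Ic j) = (z - (C2 * C1⁻¹) *ᵥ u) j := by
      intro j
      have h7 : (F *ᵥ v) (Ic j) = ((F.submatrix Ic id) *ᵥ v) j := rfl
      rw [h7, hFIc, Matrix.sub_mulVec, hz, hu, Matrix.mulVec_mulVec]
    have key3 : ‖eu (F *ᵥ v)‖ ^ 2 = ‖eu (z - (C2 * C1⁻¹) *ᵥ u)‖ ^ 2 := by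
      rw [eu_norm_sq, eu_norm_sq, sum_split hpart (fun i => ((F *ᵥ v) i) ^ 2)]
      simp only [t1, t2]
      simp
    have key3' : ‖eu (F *ᵥ v)‖ = ‖eu (z - (C2 * C1⁻¹) *ᵥ u)‖ := by
      have h8 : Real.sqrt (‖eu (F *ᵥ v)‖ ^ 2) = Real.sqrt (‖eu (z - (C2 * C1⁻¹) *ᵥ u)‖ ^ 2) := by
        rw [key3]
      rwa [Real.sqrt_sq (norm_nonneg _), Real.sqrt_sq (norm_nonneg _)] at h8
    have tE1 : ∀ j, (E *ᵥ v) (I j) = u j := fun j => rfl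
    have tE2 : ∀ j, (E *ᵥ v) (Ic j) = z j := fun j => rfl
    have hpyth : ‖eu u‖ ^ 2 + ‖eu z‖ ^ 2 = ‖eu (E *ᵥ v)‖ ^ 2 := by
      rw [eu_norm_sq, eu_norm_sq, eu_norm_sq, sum_split hpart (fun i => ((E *ᵥ v) i) ^ 2)]
      simp only [tE1, tE2]
    have htr : ‖eu (z - (C2 * C1⁻¹) *ᵥ u)‖ ≤ ‖eu z‖ + γ * ‖eu u‖ := by
      rw [eu_sub]
      calc ‖eu z - eu ((C2 * C1⁻¹) *ᵥ u)‖ ≤ ‖eu z‖ + ‖eu ((C2 * C1⁻¹) *ᵥ u)‖ :=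
            norm_sub_le _ _
        _ ≤ ‖eu z‖ + γ * ‖eu u‖ := by
            have := mulVec_norm_le (C2 * C1⁻¹) u
            rw [← hγdef] at this
            linarith
    have hscalar : ‖eu z‖ + γ * ‖eu u‖ ≤ Real.sqrt (1 + γ ^ 2) * ‖eu (E *ᵥ v)‖ := by
      set aa := ‖eu u‖ with ha
      set bb := ‖eu z‖ with hb
      set ww := ‖eu (E *ᵥ v)‖ with hw
      have hanng : 0 ≤ aa := norm_nonneg _
      have hbnng : 0 ≤ bb := norm_nonneg _
      have hwnng : 0 ≤ ww := norm_nonneg _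
      have hsq : (bb + γ * aa) ^ 2 ≤ (1 + γ ^ 2) * ww ^ 2 := by
        nlinarith [sq_nonneg (aa - γ * bb), hpyth]
      calc bb + γ * aa = Real.sqrt ((bb + γ * aa) ^ 2) := by
            rw [Real.sqrt_sq (by positivity)]
        _ ≤ Real.sqrt ((1 + γ ^ 2) * ww ^ 2) := Real.sqrt_le_sqrt hsq
        _ = Real.sqrt (1 + γ ^ 2) * ww := by
            rw [Real.sqrt_mul (by positivity), Real.sqrt_sq hwnng]
    calc ‖eu (F *ᵥ v)‖ = ‖eu (z - (C2 * C1⁻¹) *ᵥ u)‖ := key3'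
      _ ≤ ‖eu z‖ + γ * ‖eu u‖ := htr
      _ ≤ Real.sqrt (1 + γ ^ 2) * ‖eu (E *ᵥ v)‖ := hscalar
      _ ≤ Real.sqrt (1 + γ ^ 2) * (specNorm E * ‖eu v‖) :=
          mul_le_mul_of_nonneg_left (mulVec_norm_le E v) hsqnn
      _ = Real.sqrt (1 + γ ^ 2) * specNorm E * ‖eu v‖ := by ring
  calc specNorm (F * (1 - P)) ≤ specNorm F := step1
    _ ≤ Real.sqrt (1 + γ ^ 2) * specNorm E := step2
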